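/- The function g₁(z) = ((1-z)/z)·(f(z) - (1-z)), where f(z) = (-ln(1-z))·(1-z)/z, is strictly decreasing on (0,1). Equivalently, for all z ∈ (0,1), ln(1-z) < (z³ + z² - 2z)/(2(1-z)). -/

import Mathlib

open Real Set

lemma aux_log_lt : ∀ z ∈ Set.Ioo (0:ℝ) 1, Real.log (1 - z) < -z - z^2/2 := by
  intro z hz
  obtain ⟨hz0, hz1⟩ := hz
  set F : ℝ → ℝ := fun x => -x - x^2/2 - Real.log (1-x) with hF
  have hmono : StrictMonoOn F (Set.Ico (0:ℝ) 1) := by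
    apply strictMonoOn_of_deriv_pos (convex_Ico 0 1)
    · apply ContinuousOn.sub
      · fun_prop
      · apply ContinuousOn.log
        · fun_prop
        · intro x hx
          simp only [Set.mem_Ico] at hx
          have := hx.2
          intro h
          nlinarith
    · intro x hx
      rw [interior_Ico] at hx
      obtain ⟨hx0, hx1⟩ := hx
      have h1x : (0:ℝ) < 1 - x := by linarith
      have h1xne : (1:ℝ) - x ≠ 0 := ne_of_gt h1x
      have hlog : HasDerivAt (fun x : ℝ => Real.log (1-x)) (-(1/(1-x))) x := by
        have := (Real.hasDerivAt_log h1xne).comp x ((hasDerivAt_id x).const_sub 1)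
        refine this.congr_deriv ?_
        field_simp
      have h1 : HasDerivAt (fun x : ℝ => -x - x^2/2) (-1 - x) x := by
        have := ((hasDerivAt_id x).neg.sub ((hasDerivAt_pow 2 x).div_const 2))
        refine this.congr_deriv ?_
        push_cast
        ring
      have hd : HasDerivAt F (-1 - x + 1/(1-x)) x := by
        have := h1.sub hlog
        refine this.congr_deriv ?_
        ring
      rw [hd.deriv]
      have heq : -1 - x + 1/(1-x) = x^2/(1-x) := by field_simp; ring
      rw [heq]
      exact div_pos (by positivity) h1x
  have h0 : F 0 = 0 := by simp [hF]
  have hlt := hmono (by constructor <;> norm_num) ⟨le_of_lt hz0, hz1⟩ hz0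
  rw [h0] at hlt
  simp only [hF] at hlt
  linarith

theorem stmt_12 :
    StrictAntiOn
      (fun z : ℝ => ((1 - z) / z) * ((-Real.log (1 - z)) * (1 - z) / z - (1 - z)))
      (Set.Ioo 0 1) ∧
    ∀ z ∈ Set.Ioo (0:ℝ) 1,
      Real.log (1 - z) < (z ^ 3 + z ^ 2 - 2 * z) / (2 * (1 - z)) := by
  constructor
  · apply strictAntiOn_of_deriv_neg (convex_Ioo 0 1)
    · apply ContinuousOn.mul
      · apply ContinuousOn.div
        · fun_prop
        · fun_prop
        · intro x hx; exact ne_of_gt hx.1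
      · apply ContinuousOn.sub
        · apply ContinuousOn.div
          · apply ContinuousOn.mul
            · apply ContinuousOn.neg
              apply ContinuousOn.log
              · fun_prop
              · intro x hx
                have := hx.2
                intro h
                nlinarith
            · fun_prop
          · fun_prop
          · intro x hx; exact ne_of_gt hx.1
        · fun_prop
    · intro x hx
      rw [interior_Ioo] at hx
      obtain ⟨hx0, hx1⟩ := hx
      have hxne : x ≠ 0 := ne_of_gt hx0
      have h1x : (0:ℝ) < 1 - x := by linarith
      have h1xne : (1:ℝ) - x ≠ 0 := ne_of_gt h1x
      have hlog : HasDerivAt (fun z : ℝ => -Real.log (1-z)) (1/(1-x)) x := by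
        have := ((Real.hasDerivAt_log h1xne).comp x ((hasDerivAt_id x).const_sub 1)).neg
        refine this.congr_deriv ?_
        field_simp
      have hone : HasDerivAt (fun z : ℝ => 1 - z) (-1 : ℝ) x := by
        simpa using (hasDerivAt_id x).const_sub 1
      have hB1 : HasDerivAt (fun z : ℝ => (-Real.log (1-z)) * (1-z))
          (1/(1-x) * (1-x) + (-Real.log (1-x)) * (-1)) x := hlog.mul hone
      have hB2 : HasDerivAt (fun z : ℝ => (-Real.log (1-z)) * (1-z) / z)
          (((1/(1-x) * (1-x) + (-Real.log (1-x)) * (-1)) * x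
            - (-Real.log (1-x)) * (1-x) * 1) / x^2) x :=
        hB1.div (hasDerivAt_id x) hxne
      have hB : HasDerivAt (fun z : ℝ => (-Real.log (1-z)) * (1-z) / z - (1-z))
          (((1/(1-x) * (1-x) + (-Real.log (1-x)) * (-1)) * x
            - (-Real.log (1-x)) * (1-x) * 1) / x^2 - (-1)) x := hB2.sub hone
      have hA : HasDerivAt (fun z : ℝ => (1-z)/z)
          ((-1 * x - (1-x) * 1) / x^2) x := hone.div (hasDerivAt_id x) hxne
      have hG := hA.mul hB
      have heq : (-1 * x - (1-x) * 1) / x^2 * ((-Real.log (1-x)) * (1-x) / x - (1-x))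
          + (1-x)/x * (((1/(1-x) * (1-x) + (-Real.log (1-x)) * (-1)) * x
            - (-Real.log (1-x)) * (1-x) * 1) / x^2 - (-1))
          = (1-x)/x^3 * (2*x + x^2 + 2*Real.log (1-x)) := by
        field_simp
        ring
      rw [heq] at hG
      rw [HasDerivAt.deriv (f := fun z => (1 - z) / z * (-log (1 - z) * (1 - z) / z - (1 - z))) hG]
      have hkey := aux_log_lt x ⟨hx0, hx1⟩
      apply mul_neg_of_pos_of_neg
      · exact div_pos h1x (by positivity)
      · linarith
  · intro z hz
    have hkey := aux_log_lt z hz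
    have h1z : (1:ℝ) - z ≠ 0 := by
      have := hz.2; intro h; nlinarith
    have heq : (z ^ 3 + z ^ 2 - 2 * z) / (2 * (1 - z)) = -z - z^2/2 := by
      field_simp
      ring
    rw [heq]
    exact hkey
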